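/- Let K be a field and f ∈ K[x] of degree d ≥ 1. Call two decompositions f = φ_1 ∘ ψ_1 = φ_2 ∘ ψ_2 (with φ_i, ψ_i ∈ K[x]) equivalent if ψ_1 = aψ_2 + b for some a, b ∈ K with a ≠ 0. Then f has at most 2^d pairwise non-equivalent decompositions. -/

import Mathlib

open Polynomial

/-- The inner polynomial of a decomposition, normalized to be monic with zero
constant term, divides `f - f(0)`. Key divisibility fact. -/
lemma stmt_13_aux_dvd {K : Type*} [CommRing K] (φ ψ : Polynomial K) :
    ψ - C (ψ.eval 0) ∣ φ.comp ψ - C (φ.eval (ψ.eval 0)) := by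
  have h := sub_dvd_eval_sub ψ (C (ψ.eval 0)) (φ.map C)
  rwa [eval_map, eval_map, ← comp, ← comp, comp_C] at h

/-- A polynomial of degree `d ≥ 1` over a field has at most `2^d` pairwise
non-equivalent decompositions `f = φ ∘ ψ`, where two decompositions are equivalent
if their inner polynomials differ by an invertible affine change `ψ₁ = a·ψ₂ + b`. -/
theorem stmt_13 {K : Type*} [Field K] (f : Polynomial K) (d : ℕ)
    (hd : f.natDegree = d) (hd1 : 1 ≤ d)
    (S : Finset (Polynomial K × Polynomial K))
    (hdec : ∀ s ∈ S, f = s.1.comp s.2)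
    (hne : ∀ s ∈ S, ∀ s' ∈ S, s ≠ s' →
      ¬ ∃ a b : K, a ≠ 0 ∧ s.2 = Polynomial.C a * s'.2 + Polynomial.C b) :
    S.card ≤ 2 ^ d := by
  classical
  set A := AlgebraicClosure K
  -- normalization of the inner polynomial
  set norm : Polynomial K → Polynomial K :=
    fun ψ => C ψ.leadingCoeff⁻¹ * (ψ - C (ψ.eval 0)) with hnorm
  set g : Polynomial K := f - C (f.eval 0) with hg
  have hgdeg : g.natDegree = d := by rw [hg, natDegree_sub_C, hd]
  have hgne : g ≠ 0 := fun h => by rw [h, natDegree_zero] at hgdeg; omega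
  set G : Polynomial A := g.map (algebraMap K A) with hG
  have hGne : G ≠ 0 := Polynomial.map_ne_zero hgne
  have hGdeg : G.natDegree = d := by rw [hG, natDegree_map, hgdeg]
  -- facts for each element of S
  have hψdeg : ∀ s ∈ S, 1 ≤ s.2.natDegree := by
    intro s hs
    have h := hdec s hs
    by_contra h0
    have : s.2.natDegree = 0 := by omega
    rw [h, natDegree_comp, this, mul_zero] at hd
    omega
  have hlc : ∀ s ∈ S, s.2.leadingCoeff ≠ 0 := by
    intro s hs
    refine leadingCoeff_ne_zero.mpr fun h => ?_
    have := hψdeg s hs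
    rw [h, natDegree_zero] at this
    omega
  have hmonic : ∀ s ∈ S, (norm s.2).Monic := by
    intro s hs
    have h1 : (s.2 - C (s.2.eval 0)).natDegree = s.2.natDegree := natDegree_sub_C
    have h2 : (s.2 - C (s.2.eval 0)).leadingCoeff = s.2.leadingCoeff := by
      rw [leadingCoeff, h1, coeff_sub, coeff_C,
        if_neg (by have := hψdeg s hs; omega), sub_zero]
      rfl
    have : (norm s.2).leadingCoeff = 1 := by
      rw [hnorm, leadingCoeff_mul, leadingCoeff_C, h2,
        inv_mul_cancel₀ (hlc s hs)]
    exact this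
  have hdvd : ∀ s ∈ S, norm s.2 ∣ g := by
    intro s hs
    have h := stmt_13_aux_dvd s.1 s.2
    have hgeq : g = s.1.comp s.2 - C ((s.1.comp s.2).eval 0) := by
      rw [hg, hdec s hs]
    rw [eval_comp] at hgeq
    rw [← hgeq] at h
    obtain ⟨t, ht⟩ := h
    exact ⟨C s.2.leadingCoeff * t, by
      rw [ht, hnorm, mul_mul_mul_comm, ← C_mul, inv_mul_cancel₀ (hlc s hs),
        C_1, one_mul]⟩
  -- reconstruction: ψ from its normalization
  have hrec : ∀ s ∈ S, s.2 = C s.2.leadingCoeff * norm s.2 + C (s.2.eval 0) := by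
    intro s hs
    rw [hnorm, ← mul_assoc, ← C_mul, mul_inv_cancel₀ (hlc s hs), C_1,
      one_mul, sub_add_cancel]
  -- the injection into submultisets of the roots of G
  set F : Polynomial K × Polynomial K → Multiset A :=
    fun s => ((norm s.2).map (algebraMap K A)).roots with hF
  have hmem : ∀ s ∈ S, F s ∈ G.roots.powerset.toFinset := by
    intro s hs
    rw [Multiset.mem_toFinset, Multiset.mem_powerset]
    exact roots.le_of_dvd hGne (Polynomial.map_dvd _ (hdvd s hs))
  have hinj : Set.InjOn F S := by
    intro s hs s' hs' hFeq
    by_contra hss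
    -- mapped normalized polynomials are equal
    have hΨ : (norm s.2).map (algebraMap K A) = (norm s'.2).map (algebraMap K A) := by
      have m1 : ((norm s.2).map (algebraMap K A)).Monic := (hmonic s hs).map _
      have m2 : ((norm s'.2).map (algebraMap K A)).Monic := (hmonic s' hs').map _
      rw [(IsAlgClosed.splits _).eq_prod_roots_of_monic m1,
        (IsAlgClosed.splits _).eq_prod_roots_of_monic m2]
      simp only [hF] at hFeq
      rw [hFeq]
    have hn : norm s.2 = norm s'.2 :=
      Polynomial.map_injective _ (algebraMap K A).injective hΨ
    refine hne s hs s' hs' hss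
      ⟨s.2.leadingCoeff * s'.2.leadingCoeff⁻¹,
       s.2.eval 0 - s.2.leadingCoeff * s'.2.leadingCoeff⁻¹ * (s'.2.eval 0), ?_, ?_⟩
    · exact mul_ne_zero (hlc s hs) (inv_ne_zero (hlc s' hs'))
    · have h1 := hrec s hs
      rw [hn, hnorm] at h1
      refine h1.trans ?_
      simp only [C_mul, C_sub]
      ring
  calc S.card ≤ G.roots.powerset.toFinset.card :=
        Finset.card_le_card_of_injOn F hmem hinj
    _ ≤ Multiset.card G.roots.powerset := Multiset.toFinset_card_le _
    _ = 2 ^ Multiset.card G.roots := Multiset.card_powerset _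
    _ ≤ 2 ^ d := Nat.pow_le_pow_right (by norm_num)
        (le_trans (card_roots' G) (le_of_eq hGdeg))
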